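/- The function f(x,y) = -2Λ(x+y) + 2Λ(y) + Λ(x), where Λ is the Lobachevsky function Λ(θ) = -∫₀^θ log|2 sin t| dt, has a unique critical point in the open triangle {0 < x, 0 < y, x + y < π}, located at (π/2, π/4). -/

import Mathlib

open Real

noncomputable def lob (θ : ℝ) : ℝ := -∫ t in (0:ℝ)..θ, Real.log |2 * Real.sin t|

noncomputable def f (x y : ℝ) : ℝ := -2 * lob (x + y) + 2 * lob y + lob x

namespace UCPaux

noncomputable def h (t : ℝ) : ℝ := Real.log |2 * Real.sin t|

lemma h_meas : Measurable h :=
  Real.measurable_log.comp ((measurable_const.mul Real.measurable_sin).abs)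

lemma integrableOn_neg_log : MeasureTheory.IntegrableOn (fun t : ℝ => -Real.log t)
    (Set.Ioc 0 (1/2 : ℝ)) := by
  apply intervalIntegral.integrableOn_deriv_of_nonneg (g := fun t => t - t * Real.log t)
  · exact (continuous_id.sub Real.continuous_mul_log).continuousOn
  · intro t ht
    have := (hasDerivAt_id t).sub (Real.hasDerivAt_mul_log (ne_of_gt ht.1))
    exact this.congr_deriv (by ring)
  · intro t ht
    have : Real.log t < 0 := Real.log_neg ht.1 (by linarith [ht.2])
    linarith

lemma integrableOn_h (c : ℝ) (hc : c ≤ 1/2) :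
    MeasureTheory.IntegrableOn h (Set.Ioc 0 c) := by
  have hsub : Set.Ioc (0:ℝ) c ⊆ Set.Ioc 0 (1/2 : ℝ) := Set.Ioc_subset_Ioc_right hc
  have hint : MeasureTheory.IntegrableOn (fun t : ℝ => |Real.log (4/π)| - Real.log t)
      (Set.Ioc 0 c) := by
    apply MeasureTheory.Integrable.add
    · exact MeasureTheory.integrableOn_const (by simp [measure_Ioc_lt_top])
    · exact (integrableOn_neg_log.mono_set hsub)
  refine MeasureTheory.Integrable.mono' hint (h_meas.aestronglyMeasurable) ?_
  filter_upwards [MeasureTheory.ae_restrict_mem measurableSet_Ioc] with t ht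
  have ht0 : 0 < t := ht.1
  have ht2 : t ≤ 1/2 := ht.2.trans hc
  have htpi : t < π / 2 := lt_of_le_of_lt ht2 (by
    have := Real.pi_gt_three; linarith)
  have hsinpos : 0 < Real.sin t := Real.sin_pos_of_pos_of_lt_pi ht0 (by linarith [Real.pi_gt_three])
  have hsinle : Real.sin t ≤ t := Real.sin_le ht0.le
  have hup : 2 * Real.sin t ≤ 1 := by nlinarith
  have hlow : 2 / π * t ≤ Real.sin t := Real.mul_le_sin ht0.le htpi.le
  have habs : |2 * Real.sin t| = 2 * Real.sin t := abs_of_pos (by positivity)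
  have hle0 : h t ≤ 0 := by
    rw [h, habs]; exact Real.log_nonpos (by positivity) hup
  rw [Real.norm_eq_abs, abs_of_nonpos hle0]
  have hkey : Real.log (4/π * t) ≤ Real.log (2 * Real.sin t) := by
    apply Real.log_le_log (by positivity)
    have hpi : (0:ℝ) < π := Real.pi_pos
    calc 4/π * t = 2 * (2/π * t) := by ring
    _ ≤ 2 * Real.sin t := by linarith
  have h4pi : (0:ℝ) < 4/π := by positivity
  have : Real.log (4/π * t) = Real.log (4/π) + Real.log t :=
    Real.log_mul (ne_of_gt h4pi) (ne_of_gt ht0)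
  rw [h, habs]
  have := neg_le_neg hkey
  calc -Real.log (2 * Real.sin t) ≤ -Real.log (4/π * t) := this
  _ = -Real.log (4/π) - Real.log t := by rw [‹Real.log (4/π * t) = _›]; ring
  _ ≤ |Real.log (4/π)| - Real.log t := by
      have := neg_abs_le (Real.log (4/π)); linarith

lemma intervalIntegrable_h {θ : ℝ} (h0 : 0 < θ) (h1 : θ < π) :
    IntervalIntegrable h MeasureTheory.volume 0 θ := by
  set c : ℝ := min θ (1/2) with hc
  have hc0 : 0 < c := lt_min h0 (by norm_num)
  have hcθ : c ≤ θ := min_le_left _ _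
  have hI1 : IntervalIntegrable h MeasureTheory.volume 0 c := by
    rw [intervalIntegrable_iff_integrableOn_Ioc_of_le hc0.le]
    exact integrableOn_h c (min_le_right _ _)
  have hI2 : IntervalIntegrable h MeasureTheory.volume c θ := by
    apply ContinuousOn.intervalIntegrable
    intro t ht
    rw [Set.uIcc_of_le hcθ] at ht
    have htpos : 0 < Real.sin t := Real.sin_pos_of_pos_of_lt_pi (lt_of_lt_of_le hc0 ht.1)
      (lt_of_le_of_lt ht.2 h1)
    have hne : |2 * Real.sin t| ≠ 0 := by positivity
    exact ((((continuous_const.mul Real.continuous_sin).abs).continuousAt).log hne).continuousWithinAt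
  exact hI1.trans hI2

lemma lob_hasDerivAt {θ : ℝ} (h0 : 0 < θ) (h1 : θ < π) :
    HasDerivAt lob (-Real.log (2 * Real.sin θ)) θ := by
  have hsin : 0 < Real.sin θ := Real.sin_pos_of_pos_of_lt_pi h0 h1
  have hne : |2 * Real.sin θ| ≠ 0 := by positivity
  have hcont : ContinuousAt h θ :=
    (((continuous_const.mul Real.continuous_sin).abs).continuousAt).log hne
  have hmeas : StronglyMeasurableAtFilter h (nhds θ) :=
    ⟨Set.univ, Filter.univ_mem, (h_meas.aestronglyMeasurable).restrict⟩
  have H := intervalIntegral.integral_hasDerivAt_right (intervalIntegrable_h h0 h1) hmeas hcont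
  have H2 : HasDerivAt lob (-(h θ)) θ := H.neg
  have : h θ = Real.log (2 * Real.sin θ) := by
    rw [h, abs_of_pos (by positivity)]
  rwa [this] at H2

lemma deriv_f_x {x y : ℝ} (hx : 0 < x) (hy : 0 < y) (hxy : x + y < π) :
    deriv (fun x' => f x' y) x
      = 2 * Real.log (2 * Real.sin (x + y)) - Real.log (2 * Real.sin x) := by
  have h1 : HasDerivAt (fun x' => lob (x' + y)) (-Real.log (2 * Real.sin (x + y))) x :=
    HasDerivAt.comp_add_const x y (lob_hasDerivAt (by linarith) hxy)
  have h2 : HasDerivAt lob (-Real.log (2 * Real.sin x)) x :=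
    lob_hasDerivAt hx (by linarith)
  have H : HasDerivAt (fun x' => f x' y)
      (-2 * -Real.log (2 * Real.sin (x + y)) + 0 + -Real.log (2 * Real.sin x)) x :=
    ((h1.const_mul (-2)).add (hasDerivAt_const x (2 * lob y))).add h2
  rw [H.deriv]; ring

lemma deriv_f_y {x y : ℝ} (hx : 0 < x) (hy : 0 < y) (hxy : x + y < π) :
    deriv (fun y' => f x y') y
      = 2 * Real.log (2 * Real.sin (x + y)) - 2 * Real.log (2 * Real.sin y) := by
  have h1 : HasDerivAt (fun y' => lob (x + y')) (-Real.log (2 * Real.sin (x + y))) y :=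
    HasDerivAt.comp_const_add x y (lob_hasDerivAt (by linarith) hxy)
  have h2 : HasDerivAt lob (-Real.log (2 * Real.sin y)) y :=
    lob_hasDerivAt hy (by linarith)
  have H : HasDerivAt (fun y' => f x y')
      (-2 * -Real.log (2 * Real.sin (x + y)) + 2 * -Real.log (2 * Real.sin y) + 0) y :=
    ((h1.const_mul (-2)).add (h2.const_mul 2)).add (hasDerivAt_const y (lob x))
  rw [H.deriv]; ring

end UCPaux

theorem unique_critical_point :
    ∀ x y : ℝ, 0 < x → 0 < y → x + y < π →
      ((deriv (fun x' => f x' y) x = 0 ∧ deriv (fun y' => f x y') y = 0) ↔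
        (x = π / 2 ∧ y = π / 4)) := by
  intro x y hx hy hxy
  rw [UCPaux.deriv_f_x hx hy hxy, UCPaux.deriv_f_y hx hy hxy]
  have hpi : (0:ℝ) < π := Real.pi_pos
  have hsx : 0 < Real.sin x := Real.sin_pos_of_pos_of_lt_pi hx (by linarith)
  have hsy : 0 < Real.sin y := Real.sin_pos_of_pos_of_lt_pi hy (by linarith)
  have hss : 0 < Real.sin (x + y) := Real.sin_pos_of_pos_of_lt_pi (by linarith) hxy
  constructor
  · rintro ⟨e1, e2⟩
    -- from e2: sin (x+y) = sin y
    have hlog2 : Real.log (2 * Real.sin (x + y)) = Real.log (2 * Real.sin y) := by linarith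
    have hsin_eq : Real.sin (x + y) = Real.sin y := by
      have := Real.log_injOn_pos (Set.mem_Ioi.2 (by positivity : (0:ℝ) < 2 * Real.sin (x+y)))
        (Set.mem_Ioi.2 (by positivity : (0:ℝ) < 2 * Real.sin y)) hlog2
      linarith
    -- sin(x+y) - sin y = 0 ⇒ cos((x+2y)/2) = 0 ⇒ x + 2y = π
    have hdiff : 2 * Real.sin (x / 2) * Real.cos ((x + 2*y) / 2) = 0 := by
      have := Real.sin_sub_sin (x + y) y
      rw [hsin_eq, sub_self] at this
      have e : (x + y - y) / 2 = x / 2 := by ring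
      have e2 : (x + y + y) / 2 = (x + 2*y) / 2 := by ring
      rw [e, e2] at this
      linarith [this]
    have hsinx2 : 0 < Real.sin (x / 2) :=
      Real.sin_pos_of_pos_of_lt_pi (by linarith) (by linarith)
    have hcos0 : Real.cos ((x + 2*y) / 2) = 0 := by
      rcases mul_eq_zero.1 hdiff with h' | h'
      · rcases mul_eq_zero.1 h' with h'' | h''
        · norm_num at h''
        · linarith
      · exact h'
    have hxy2 : x + 2*y = π := by
      rw [Real.cos_eq_zero_iff] at hcos0
      obtain ⟨k, hk⟩ := hcos0
      have hb1 : 0 < (x + 2*y) / 2 := by linarith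
      have hb2 : (x + 2*y) / 2 < π := by linarith
      have : (k : ℝ) = 0 := by
        by_contra hk0
        rcases lt_or_gt_of_ne (fun h => hk0 (by exact_mod_cast h) : (k:ℝ) ≠ 0) with hlt | hgt
        · have : (k : ℝ) ≤ -1 := by
            have hk' : k < 0 := by exact_mod_cast hlt
            have : k ≤ -1 := by omega
            exact_mod_cast this
          nlinarith
        · have : (1:ℝ) ≤ (k : ℝ) := by
            have hk' : 0 < k := by exact_mod_cast hgt
            have : 1 ≤ k := by omega
            exact_mod_cast this
          nlinarith
      rw [this] at hk
      simp at hk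
      linarith
    -- from e1: 2 log(2 sin(x+y)) = log(2 sin x); with sin(x+y)=sin y and sin x = sin 2y
    have hx_eq : x = π - 2*y := by linarith
    have hsinx : Real.sin x = 2 * Real.sin y * Real.cos y := by
      rw [hx_eq]
      rw [show π - 2*y = π - (2*y) from rfl, Real.sin_pi_sub, Real.sin_two_mul]
    have hcosy : 0 < Real.cos y := by
      have h2y : 2*y < π := by linarith
      exact Real.cos_pos_of_mem_Ioo ⟨by linarith, by linarith⟩
    have he1' : Real.log ((2 * Real.sin y)^2) = Real.log (2 * Real.sin x) := by
      rw [Real.log_pow]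
      push_cast
      rw [hsin_eq] at e1
      linarith
    have hsq : (2 * Real.sin y)^2 = 2 * Real.sin x := by
      have := Real.log_injOn_pos (Set.mem_Ioi.2 (by positivity : (0:ℝ) < (2 * Real.sin y)^2))
        (Set.mem_Ioi.2 (by positivity : (0:ℝ) < 2 * Real.sin x)) he1'
      linarith
    have hsc : Real.sin y = Real.cos y := by
      rw [hsinx] at hsq
      nlinarith
    -- y = π/4
    have hy4 : y = π / 4 := by
      have : Real.sin (π/4 - y) = 0 := by
        rw [Real.sin_sub, Real.sin_pi_div_four, Real.cos_pi_div_four, hsc]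
        ring
      rw [Real.sin_eq_zero_iff] at this
      obtain ⟨k, hk⟩ := this
      have hb1 : -π < π/4 - y := by linarith
      have hb2 : π/4 - y < π := by linarith
      have hk0 : (k : ℝ) = 0 := by
        by_contra h0
        rcases lt_or_gt_of_ne (fun h => h0 (by exact_mod_cast h) : (k:ℝ) ≠ 0) with hlt | hgt
        · have : (k : ℝ) ≤ -1 := by
            have hk' : k < 0 := by exact_mod_cast hlt
            have : k ≤ -1 := by omega
            exact_mod_cast this
          nlinarith
        · have : (1:ℝ) ≤ (k : ℝ) := by
            have hk' : 0 < k := by exact_mod_cast hgt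
            have : 1 ≤ k := by omega
            exact_mod_cast this
          nlinarith
      rw [hk0] at hk
      simp at hk
      linarith
    exact ⟨by linarith, hy4⟩
  · rintro ⟨hX, hY⟩
    subst hX; subst hY
    have h34 : π/2 + π/4 = 3 * (π/4) := by ring
    have hs34 : Real.sin (π/2 + π/4) = Real.sqrt 2 / 2 := by
      rw [h34]
      rw [show (3:ℝ) * (π/4) = π - π/4 by ring, Real.sin_pi_sub, Real.sin_pi_div_four]
    constructor
    · rw [hs34, Real.sin_pi_div_two]
      have : (2:ℝ) * (Real.sqrt 2 / 2) = Real.sqrt 2 := by ring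
      rw [this]
      rw [Real.log_sqrt (by norm_num)]
      ring_nf
    · rw [hs34, Real.sin_pi_div_four]
      ring
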